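/- Let D be a 2-edge-connected finite simple graph, e an edge of D, and u, u′ two (not necessarily distinct) vertices of D. Then there is a trail in D from u to u′ whose edge set contains e. -/

import Mathlib

open SimpleGraph

section Aux

variable {V : Type*} {D : SimpleGraph V}

open SimpleGraph.Walk

/-- From a closed trail `C` through `e`, extract a trail from the base point to any
support vertex `x` that still goes through `e`, using only edges of `C`. -/
lemma stmt6_exists_trail_through {v : V} (C : D.Walk v v) (hC : C.IsTrail) {e : Sym2 V}
    (heC : e ∈ C.edges) {x : V} (hx : x ∈ C.support) :
    ∃ T : D.Walk v x, T.IsTrail ∧ e ∈ T.edges ∧ ∀ f ∈ T.edges, f ∈ C.edges := by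
  classical
  by_cases h : e ∈ (C.takeUntil x hx).edges
  · exact ⟨C.takeUntil x hx, hC.takeUntil hx, h, fun f hf => C.edges_takeUntil_subset hx hf⟩
  · have h2 : e ∈ (C.dropUntil x hx).edges := by
      have hspec : e ∈ (C.takeUntil x hx).edges ++ (C.dropUntil x hx).edges := by
        rw [← edges_append, C.take_spec hx]; exact heC
      rcases List.mem_append.mp hspec with h4 | h4
      · exact absurd h4 h
      · exact h4
    refine ⟨(C.dropUntil x hx).reverse, IsTrail.reverse _ (hC.dropUntil hx), ?_, ?_⟩
    · rwa [edges_reverse, List.mem_reverse]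
    · intro f hf
      rw [edges_reverse, List.mem_reverse] at hf
      exact C.edges_dropUntil_subset hx hf

/-- First-hit lemma: given a path `R : u → v` with `v` on the support of a closed walk
`C`, there is a path `Q` from `u` to some vertex `x` of `C` avoiding the edges of `C`,
with support and edges inside those of `R`. -/
lemma stmt6_first_hit {w : V} (C : D.Walk w w) :
    ∀ {u v : V} (R : D.Walk u v), R.IsPath → v ∈ C.support →
      ∃ x, x ∈ C.support ∧ ∃ Q : D.Walk u x, Q.IsPath ∧ Q.support ⊆ R.support ∧
        (∀ f ∈ Q.edges, f ∈ R.edges) ∧ ∀ f ∈ Q.edges, f ∉ C.edges := by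
  classical
  intro u v R
  induction R with
  | nil =>
      intro _ hv
      exact ⟨_, hv, Walk.nil, IsPath.nil, by simp, by simp, by simp⟩
  | @cons a b c h R' ih =>
      intro hp hv
      by_cases hu : a ∈ C.support
      · exact ⟨a, hu, Walk.nil, IsPath.nil, by simp, by simp, by simp⟩
      · obtain ⟨x, hx, Q', hQ'path, hsupp, hedges, hnotC⟩ :=
          ih hp.of_cons (by simpa using hv)
        refine ⟨x, hx, Walk.cons h Q', ?_, ?_, ?_, ?_⟩
        · rw [cons_isPath_iff]
          exact ⟨hQ'path, fun hc => ((cons_isPath_iff _ _).mp hp).2 (hsupp hc)⟩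
        · intro y hy
          rw [support_cons, List.mem_cons] at hy
          rw [support_cons, List.mem_cons]
          rcases hy with hy | hy
          · exact Or.inl hy
          · exact Or.inr (hsupp hy)
        · intro f hf
          rw [edges_cons, List.mem_cons] at hf
          rw [edges_cons, List.mem_cons]
          rcases hf with hf | hf
          · exact Or.inl hf
          · exact Or.inr (hedges f hf)
        · intro f hf
          rw [edges_cons, List.mem_cons] at hf
          rcases hf with hf | hf
          · subst hf
            exact fun hc => hu (Walk.fst_mem_support_of_mem_edges C hc)
          · exact hnotC f hf

/-- Base case: a closed trail at `a` through the non-bridge edge `s(a,b)`. -/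
lemma stmt6_base (hnb : ∀ f, ¬ D.IsBridge f) {a b : V} (hab : D.Adj a b) :
    ∃ C : D.Walk a a, C.IsTrail ∧ s(a, b) ∈ C.edges := by
  classical
  have h1 := hnb s(a, b)
  rw [isBridge_iff] at h1
  push_neg at h1
  obtain ⟨P, hP⟩ := reachable_delete_edges_iff_exists_walk.mp h1
  have hP1 : s(a, b) ∉ (P.toPath : D.Walk a b).edges :=
    fun hh => hP (P.edges_toPath_subset hh)
  refine ⟨Walk.cons hab (P.toPath : D.Walk a b).reverse, ?_, ?_⟩
  · rw [isTrail_cons]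
    refine ⟨IsTrail.reverse _ P.toPath.2.isTrail, ?_⟩
    rwa [edges_reverse, List.mem_reverse]
  · rw [edges_cons]
    exact List.mem_cons_self

/-- Surgery step: move a closed trail through `e` from `w` to an adjacent vertex `u`. -/
lemma stmt6_step (hnb : ∀ f, ¬ D.IsBridge f) {e : Sym2 V} {u w : V} (h : D.Adj u w)
    (hw : ∃ C : D.Walk w w, C.IsTrail ∧ e ∈ C.edges) :
    ∃ C : D.Walk u u, C.IsTrail ∧ e ∈ C.edges := by
  classical
  obtain ⟨C, hC, heC⟩ := hw
  by_cases hu : u ∈ C.support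
  · exact ⟨C.rotate u hu, hC.rotate hu, ((C.rotate_edges u hu).perm.mem_iff).mpr heC⟩
  · have h2 := hnb s(u, w)
    rw [isBridge_iff] at h2
    push_neg at h2
    obtain ⟨R₀, hR₀⟩ := reachable_delete_edges_iff_exists_walk.mp h2
    have hRpath : (R₀.toPath : D.Walk u w).IsPath := R₀.toPath.2
    have hfR : s(u, w) ∉ (R₀.toPath : D.Walk u w).edges :=
      fun hh => hR₀ (R₀.edges_toPath_subset hh)
    obtain ⟨x, hx, Q, hQpath, hQsupp, hQR, hQC⟩ :=
      stmt6_first_hit C (R₀.toPath : D.Walk u w) hRpath C.start_mem_support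
    obtain ⟨T, hT, heT, hTC⟩ := stmt6_exists_trail_through C hC heC hx
    refine ⟨Walk.cons h (T.append Q.reverse), ?_, ?_⟩
    · rw [isTrail_cons]
      constructor
      · rw [isTrail_def, edges_append, List.nodup_append]
        refine ⟨hT.edges_nodup, (IsTrail.reverse _ hQpath.isTrail).edges_nodup, ?_⟩
        intro f hf g hg hfg
        rw [edges_reverse, List.mem_reverse] at hg
        subst hfg
        exact hQC f hg (hTC f hf)
      · rw [edges_append, List.mem_append]
        rintro (hf | hf)
        · exact hu (Walk.fst_mem_support_of_mem_edges C (hTC _ hf))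
        · rw [edges_reverse, List.mem_reverse] at hf
          exact hfR (hQR _ hf)
    · rw [edges_cons, edges_append]
      exact List.mem_cons_of_mem _ (List.mem_append.mpr (Or.inl heT))

/-- Transport a closed trail through `e` along any walk. -/
lemma stmt6_transport (hnb : ∀ f, ¬ D.IsBridge f) {e : Sym2 V} :
    ∀ {u v : V}, D.Walk u v → (∃ C : D.Walk v v, C.IsTrail ∧ e ∈ C.edges) →
      ∃ C : D.Walk u u, C.IsTrail ∧ e ∈ C.edges := by
  intro u v p
  induction p with
  | nil => exact id
  | cons h p ih => exact fun hv => stmt6_step hnb h (ih hv)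

end Aux

/-- In a 2-edge-connected finite simple graph `D` (connected, at least two vertices,
no bridge), for any edge `e` and any two vertices `u, u'` there is a trail from `u`
to `u'` whose edge set contains `e`. -/
theorem stmt6 {V : Type*} [Fintype V] (D : SimpleGraph V)
    (hconn : D.Connected) (hcard : 2 ≤ Fintype.card V) (hnb : ∀ f, ¬ D.IsBridge f)
    (e : Sym2 V) (he : e ∈ D.edgeSet) (u u' : V) :
    ∃ p : D.Walk u u', p.IsTrail ∧ e ∈ p.edges := by
  classical
  induction e using Sym2.ind with
  | _ a b =>
    have hab : D.Adj a b := he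
    obtain ⟨p0⟩ := hconn.preconnected u' a
    obtain ⟨C, hC, heC⟩ := stmt6_transport hnb p0 (stmt6_base hnb hab)
    obtain ⟨w0⟩ := hconn.preconnected u u'
    obtain ⟨x, hx, Q, hQpath, _, _, hQC⟩ :=
      stmt6_first_hit C (w0.toPath : D.Walk u u') w0.toPath.2 C.start_mem_support
    obtain ⟨T, hT, heT, hTC⟩ := stmt6_exists_trail_through C hC heC hx
    refine ⟨Q.append T.reverse, ?_, ?_⟩
    · rw [SimpleGraph.Walk.isTrail_def, SimpleGraph.Walk.edges_append, List.nodup_append]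
      refine ⟨hQpath.isTrail.edges_nodup,
        (SimpleGraph.Walk.IsTrail.reverse _ hT).edges_nodup, ?_⟩
      intro f hf g hg hfg
      rw [SimpleGraph.Walk.edges_reverse, List.mem_reverse] at hg
      subst hfg
      exact hQC f hf (hTC f hg)
    · rw [SimpleGraph.Walk.edges_append, List.mem_append,
        SimpleGraph.Walk.edges_reverse, List.mem_reverse]
      exact Or.inr heT
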